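/- For all n ≥ 1, n divides 2^n·C(3n, n-1), and the quotient (2^n/n)·C(3n,n-1) equals (2^n/(2n+1))·C(3n,n). -/

import Mathlib

theorem stmt18 (n : ℕ) (hn : 1 ≤ n) :
    n ∣ 2 ^ n * Nat.choose (3 * n) (n - 1) ∧
    (2 ^ n / (n : ℚ)) * Nat.choose (3 * n) (n - 1)
      = (2 ^ n / (2 * (n : ℚ) + 1)) * Nat.choose (3 * n) n := by
  obtain ⟨m, rfl⟩ : ∃ m, n = m + 1 := ⟨n - 1, (Nat.succ_pred_eq_of_pos hn).symm⟩
  have key : Nat.choose (3 * (m + 1)) (m + 1) * (m + 1)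
      = Nat.choose (3 * (m + 1)) m * (2 * (m + 1) + 1) := by
    have h := Nat.choose_succ_right_eq (3 * (m + 1)) m
    have hs : 3 * (m + 1) - m = 2 * (m + 1) + 1 := by omega
    rw [hs] at h
    exact h
  constructor
  · have h1 : (m + 1) ∣ Nat.choose (3 * (m + 1)) m * (2 * (m + 1) + 1) :=
      ⟨Nat.choose (3 * (m + 1)) (m + 1), by linarith [key]⟩
    have hcop : Nat.Coprime (m + 1) (2 * (m + 1) + 1) := by
      have h2 : 2 * (m + 1) + 1 = 1 + (m + 1) * 2 := by ring
      rw [h2]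
      exact (Nat.coprime_add_mul_left_right _ 1 2).mpr (Nat.coprime_one_right _)
    have h2 : (m + 1) ∣ Nat.choose (3 * (m + 1)) m :=
      (Nat.Coprime.dvd_of_dvd_mul_right hcop) h1
    simp only [Nat.add_sub_cancel]
    exact Dvd.dvd.mul_left h2 _
  · have keyQ : (Nat.choose (3 * (m + 1)) (m + 1) : ℚ) * ((m : ℚ) + 1)
      = (Nat.choose (3 * (m + 1)) m : ℚ) * (2 * ((m : ℚ) + 1) + 1) := by
      exact_mod_cast congrArg (Nat.cast : ℕ → ℚ) key
    simp only [Nat.add_sub_cancel]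
    have h1 : ((m : ℚ) + 1) ≠ 0 := by positivity
    have h2 : (2 * ((m : ℚ) + 1) + 1) ≠ 0 := by positivity
    push_cast
    field_simp
    linear_combination (-1 : ℚ) * keyQ
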